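/- Let n ∈ (1,∞). The function c_n : [0,4] × [0,1] → [0,∞) defined by c_n(z,u) := z(4−z)[(1 − zu + zu²)^{n/2} − (1−u)^n]² / ( 2u² [u^{2n−2} + (1−u)^{2n−2}] ) for u ∈ (0,1], and c_n(z,0) := n² z (4−z)(2−z)²/8, is well defined (the denominator is nonzero for u ∈ (0,1]) and continuous on [0,4] × [0,1]; consequently c_n attains a finite maximum C_n := max_{(z,u)∈[0,4]×[0,1]} c_n(z,u) ∈ (0,∞). -/

import Mathlib

noncomputable section

/-- The function `c_n` of the paper on `[0,4] × [0,1]` (first coordinate `z`,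
second coordinate `u`), defined piecewise at `u = 0`. -/
def cFun (n : ℝ) (zu : ℝ × ℝ) : ℝ :=
  if zu.2 = 0 then n ^ 2 * zu.1 * (4 - zu.1) * (2 - zu.1) ^ 2 / 8
  else zu.1 * (4 - zu.1) *
      ((1 - zu.1 * zu.2 + zu.1 * zu.2 ^ 2) ^ (n / 2) - (1 - zu.2) ^ n) ^ 2 /
    (2 * zu.2 ^ 2 * (zu.2 ^ (2 * n - 2) + (1 - zu.2) ^ (2 * n - 2)))

/-- Difference quotient of `t ↦ (1+t)^q` at `0`. -/
def phiAux (q t : ℝ) : ℝ := if t = 0 then q else ((1 + t) ^ q - 1) / t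

lemma phiAux_continuous (q : ℝ) (hq : 0 < q) : Continuous (phiAux q) := by
  rw [continuous_iff_continuousAt]
  intro x
  rcases eq_or_ne x 0 with rfl | hx
  · -- continuity at 0 via the derivative of `t ↦ (1+t)^q`
    have h2 : HasDerivAt (fun t : ℝ => 1 + t) 1 0 := (hasDerivAt_id (0 : ℝ)).const_add 1
    have h1 : HasDerivAt (fun x : ℝ => x ^ q) (q * (1 : ℝ) ^ (q - 1))
        ((fun t : ℝ => 1 + t) 0) := by
      simp only [add_zero]
      exact Real.hasDerivAt_rpow_const (Or.inl one_ne_zero)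
    have h3 : HasDerivAt (fun t : ℝ => (1 + t) ^ q) q 0 := by
      have := h1.comp (0 : ℝ) h2
      simp only [Real.one_rpow, mul_one] at this
      exact this
    rw [hasDerivAt_iff_tendsto_slope] at h3
    rw [← continuousWithinAt_compl_self]
    have heq : ∀ t ∈ ({(0 : ℝ)}ᶜ : Set ℝ), phiAux q t = slope (fun t : ℝ => (1 + t) ^ q) 0 t := by
      intro t ht
      have ht' : t ≠ 0 := ht
      simp [phiAux, ht', slope, Real.one_rpow, div_eq_inv_mul]
    have : Filter.Tendsto (phiAux q) (nhdsWithin 0 {(0 : ℝ)}ᶜ) (nhds q) := by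
      refine h3.congr' ?_
      filter_upwards [self_mem_nhdsWithin] with t ht
      exact (heq t ht).symm
    simpa [ContinuousWithinAt, phiAux] using this
  · have hcont : ContinuousAt (fun t : ℝ => ((1 + t) ^ q - 1) / t) x := by
      apply ContinuousAt.div
      · exact (((Real.continuous_rpow_const hq.le).comp (continuous_const.add continuous_id)).sub
          continuous_const).continuousAt
      · exact continuousAt_id
      · exact hx
    refine hcont.congr ?_
    filter_upwards [isOpen_compl_singleton.mem_nhds hx] with t ht
    have ht' : t ≠ 0 := ht
    simp [phiAux, ht']

/-- Auxiliary denominator. -/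
def dAux (n u : ℝ) : ℝ := u ^ (2 * n - 2) + (1 - u) ^ (2 * n - 2)

/-- Auxiliary "difference-quotient" function whose square gives `cFun`. -/
def gAux (n : ℝ) (zu : ℝ × ℝ) : ℝ :=
  phiAux (n / 2) (zu.1 * zu.2 ^ 2 - zu.1 * zu.2) * (zu.1 * zu.2 - zu.1) + phiAux n (-zu.2)

lemma dAux_pos (n : ℝ) (hn : 1 < n) {u : ℝ} (hu : u ∈ Set.Icc (0 : ℝ) 1) : 0 < dAux n u := by
  rcases eq_or_lt_of_le hu.1 with rfl | hu0
  · simp [dAux, Real.zero_rpow (by nlinarith : 2 * n - 2 ≠ 0), Real.one_rpow]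
  · exact add_pos_of_pos_of_nonneg (Real.rpow_pos_of_pos hu0 _)
      (Real.rpow_nonneg (by linarith [hu.2]) _)

lemma cFun_eq (n : ℝ) (hn : 1 < n) {zu : ℝ × ℝ}
    (hzu : zu ∈ Set.Icc (0 : ℝ) 4 ×ˢ Set.Icc (0 : ℝ) 1) :
    cFun n zu = zu.1 * (4 - zu.1) * gAux n zu ^ 2 / (2 * dAux n zu.2) := by
  obtain ⟨z, u⟩ := zu
  obtain ⟨hz, hu⟩ := hzu
  have hD : 0 < dAux n u := dAux_pos n hn hu
  rcases eq_or_ne u 0 with rfl | hu0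
  · have hd : dAux n 0 = 1 := by
      simp [dAux, Real.zero_rpow (by nlinarith : 2 * n - 2 ≠ 0), Real.one_rpow]
    have hg : gAux n (z, 0) = n - n / 2 * z := by
      simp only [gAux, phiAux]
      norm_num
      ring
    show cFun n (z, 0) = z * (4 - z) * gAux n (z, 0) ^ 2 / (2 * dAux n 0)
    rw [hg, hd]
    simp only [cFun, if_pos rfl, eq_self_iff_true, if_true]
    ring
  · have hcf : cFun n (z, u) = z * (4 - z) *
        ((1 - z * u + z * u ^ 2) ^ (n / 2) - (1 - u) ^ n) ^ 2 /
        (2 * u ^ 2 * dAux n u) := by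
      simp [cFun, hu0, dAux]
    have hg : gAux n (z, u) * u =
        (1 - z * u + z * u ^ 2) ^ (n / 2) - (1 - u) ^ n := by
      have hpsi : phiAux n (-u) * u = 1 - (1 - u) ^ n := by
        have : (-u : ℝ) ≠ 0 := neg_ne_zero.mpr hu0
        rw [phiAux, if_neg this]
        rw [show (1 : ℝ) + -u = 1 - u by ring]
        field_simp
        ring
      rcases eq_or_ne (z * u ^ 2 - z * u) 0 with ht | ht
      · have hzz : z * u - z = 0 := by
          have : u * (z * u - z) = 0 := by rw [← ht]; ring
          rcases mul_eq_zero.mp this with h | h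
          · exact absurd h hu0
          · exact h
        have h1 : 1 - z * u + z * u ^ 2 = 1 := by
          have : z * u ^ 2 - z * u = 0 := ht
          nlinarith [this]
        rw [gAux]
        simp only
        rw [ht, h1, hzz, Real.one_rpow, mul_zero, add_mul, zero_mul, zero_add]
        rw [hpsi]
      · rw [gAux]
        simp only
        rw [phiAux, if_neg ht]
        rw [show (1 : ℝ) + (z * u ^ 2 - z * u) = 1 - z * u + z * u ^ 2 by ring]
        rw [add_mul, hpsi]
        have ht' : z * u ^ 2 - z * u = u * (z * u - z) := by ring
        have hzu' : z * u - z ≠ 0 := fun h => ht (by rw [ht', h, mul_zero])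
        rw [ht']
        have key : ((1 - z * u + z * u ^ 2) ^ (n / 2) - 1) / (u * (z * u - z)) * (z * u - z) * u =
            (1 - z * u + z * u ^ 2) ^ (n / 2) - 1 := by
          rw [div_mul_eq_mul_div, div_mul_eq_mul_div, div_eq_iff (mul_ne_zero hu0 hzu')]
          ring
        linear_combination key
    rw [hcf]
    have : (1 - z * u + z * u ^ 2) ^ (n / 2) - (1 - u) ^ n = gAux n (z, u) * u := hg.symm
    rw [this]
    field_simp

/-- for `n ∈ (1,∞)`, the function `c_n` is well defined (its denominator is
nonzero for `u ∈ (0,1]`), continuous on `[0,4] × [0,1]`, and attains a finite, strictly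
positive maximum `C_n` there. -/
theorem stmt7 (n : ℝ) (hn : 1 < n) :
    (∀ z ∈ Set.Icc (0 : ℝ) 4, ∀ u ∈ Set.Ioc (0 : ℝ) 1,
      2 * u ^ 2 * (u ^ (2 * n - 2) + (1 - u) ^ (2 * n - 2)) ≠ 0) ∧
    ContinuousOn (cFun n) (Set.Icc (0 : ℝ) 4 ×ˢ Set.Icc (0 : ℝ) 1) ∧
    ∃ zu ∈ Set.Icc (0 : ℝ) 4 ×ˢ Set.Icc (0 : ℝ) 1,
      (∀ zu' ∈ Set.Icc (0 : ℝ) 4 ×ˢ Set.Icc (0 : ℝ) 1, cFun n zu' ≤ cFun n zu) ∧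
      0 < cFun n zu := by
  have hne : (2 : ℝ) * n - 2 ≠ 0 := by nlinarith
  have hnn : (0 : ℝ) ≤ 2 * n - 2 := by linarith
  have hcontg : Continuous (gAux n) := by
    have h1 : Continuous (phiAux (n / 2)) := phiAux_continuous _ (by linarith)
    have h2 : Continuous (phiAux n) := phiAux_continuous _ (by linarith)
    exact ((h1.comp (by fun_prop)).mul (by fun_prop)).add (h2.comp (by fun_prop))
  have hcontD : Continuous (fun u : ℝ => dAux n u) := by
    exact (Real.continuous_rpow_const hnn).add
      ((Real.continuous_rpow_const hnn).comp (continuous_const.sub continuous_id))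
  have hcont : ContinuousOn (cFun n) (Set.Icc (0 : ℝ) 4 ×ˢ Set.Icc (0 : ℝ) 1) := by
    have : ContinuousOn (fun zu : ℝ × ℝ => zu.1 * (4 - zu.1) * gAux n zu ^ 2 / (2 * dAux n zu.2))
        (Set.Icc (0 : ℝ) 4 ×ˢ Set.Icc (0 : ℝ) 1) := by
      apply ContinuousOn.div
      · fun_prop
      · exact (continuous_const.mul (hcontD.comp continuous_snd)).continuousOn
      · intro zu hzu
        have := dAux_pos n hn hzu.2
        positivity
    exact this.congr fun zu hzu => cFun_eq n hn hzu
  refine ⟨?_, hcont, ?_⟩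
  · intro z hz u hu
    have h1 : 0 < u ^ 2 := pow_pos hu.1 2
    have h2 : 0 < u ^ (2 * n - 2) + (1 - u) ^ (2 * n - 2) :=
      dAux_pos n hn ⟨hu.1.le, hu.2⟩
    positivity
  · have hK : IsCompact (Set.Icc (0 : ℝ) 4 ×ˢ Set.Icc (0 : ℝ) 1) :=
      isCompact_Icc.prod isCompact_Icc
    have hne' : (Set.Icc (0 : ℝ) 4 ×ˢ Set.Icc (0 : ℝ) 1).Nonempty :=
      ⟨(0, 0), by constructor <;> constructor <;> norm_num⟩
    obtain ⟨zu, hzu, hmax⟩ := hK.exists_isMaxOn hne' hcont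
    refine ⟨zu, hzu, fun zu' h => hmax h, ?_⟩
    have h10 : ((1 : ℝ), (0 : ℝ)) ∈ Set.Icc (0 : ℝ) 4 ×ˢ Set.Icc (0 : ℝ) 1 := by
      constructor <;> constructor <;> norm_num
    have hval : cFun n (1, 0) = n ^ 2 * 3 / 8 := by
      norm_num [cFun]
    have : (0 : ℝ) < cFun n (1, 0) := by
      rw [hval]; nlinarith
    exact lt_of_lt_of_le this (hmax h10)
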